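/- If the minimum-cost assignment of the m travelers to m distinct clusters (each traveler t assigned cluster a(t), with cost C_{t,a(t)} = min over nodes v in cluster a(t) of the round trip cost from depot t to v and back) has total cost exceeding the budget B, then the mDmSOP instance with cumulative budget B has no feasible solution in which every traveler visits at least one non-depot cluster. -/

import Mathlib

lemma walk_lb {V : Type} (c : V → V → ℝ)
    (htri : ∀ i j k, c i k ≤ c i j + c j k) (w : ℕ → V) :
    ∀ n : ℕ, c (w 0) (w (n + 1)) ≤ ∑ l ∈ Finset.range (n + 1), c (w l) (w (l + 1)) := by
  intro n
  induction n with
  | zero => simp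
  | succ n ih =>
      rw [Finset.sum_range_succ]
      calc c (w 0) (w (n + 2)) ≤ c (w 0) (w (n + 1)) + c (w (n + 1)) (w (n + 2)) :=
            htri _ _ _
        _ ≤ _ := by linarith

/-- If the minimum-cost assignment of the `m` travelers to `m` distinct
clusters (traveler `t` to cluster `a t` at cost `C t (a t)`, the minimum
round-trip cost from depot `t` into cluster `a t`) has total cost exceeding
the budget `B`, then the mDmSOP instance with cumulative budget `B` has no
feasible solution in which every traveler visits at least one cluster. -/
theorem stmt_11 {V Q : Type} [Fintype V] [Fintype Q] {m : ℕ}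
    (d : Fin m → V) (s : Q → Finset V)
    (c : V → V → ℝ) (hc : ∀ i j, 0 ≤ c i j)
    (htri : ∀ i j k, c i k ≤ c i j + c j k) (B : ℝ)
    (C : Fin m → Q → ℝ)
    (hC : ∀ t q, IsLeast {r : ℝ | ∃ v ∈ s q, r = c (d t) v + c v (d t)} (C t q))
    (hung : ∀ a : Fin m → Q, Function.Injective a → B < ∑ t, C t (a t)) :
    ¬ ∃ (k : Fin m → ℕ) (w : Fin m → ℕ → V) (visit : Fin m → Q),
        Function.Injective visit ∧
        (∀ t, 0 < k t ∧ w t 0 = d t ∧ w t (k t) = d t ∧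
          ∃ l, 0 < l ∧ l < k t ∧ w t l ∈ s (visit t)) ∧
        ∑ t, ∑ l ∈ Finset.range (k t), c (w t l) (w t (l + 1)) ≤ B := by
  rintro ⟨k, w, visit, hinj, hfeas, hbud⟩
  have key : ∀ t, C t (visit t) ≤ ∑ l ∈ Finset.range (k t), c (w t l) (w t (l + 1)) := by
    intro t
    obtain ⟨hk, h0, hkd, l, hl0, hlk, hmem⟩ := hfeas t
    -- split sum at l
    have hsplit : ∑ x ∈ Finset.range (k t), c (w t x) (w t (x + 1))
        = (∑ x ∈ Finset.range l, c (w t x) (w t (x + 1)))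
          + ∑ x ∈ Finset.range (k t - l), c (w t (l + x)) (w t (l + x + 1)) := by
      rw [Finset.range_eq_Ico, ← Finset.sum_Ico_consecutive _ (Nat.zero_le l) hlk.le]
      congr 1
      · rw [Finset.range_eq_Ico]
      rw [Finset.sum_Ico_eq_sum_range, Finset.range_eq_Ico]
    have hpre : c (w t 0) (w t l) ≤ ∑ x ∈ Finset.range l, c (w t x) (w t (x + 1)) := by
      obtain ⟨l', hl'⟩ := Nat.exists_eq_add_of_lt hl0
      have hl2 : l = l' + 1 := by omega
      rw [hl2]
      exact walk_lb c htri (w t) l'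
    have hsuf : c (w t l) (w t (k t)) ≤
        ∑ x ∈ Finset.range (k t - l), c (w t (l + x)) (w t (l + x + 1)) := by
      have hpos : 0 < k t - l := Nat.sub_pos_of_lt hlk
      obtain ⟨n, hn⟩ := Nat.exists_eq_add_of_lt hpos
      have := walk_lb c htri (fun x => w t (l + x)) n
      simp only [← add_assoc] at this
      rw [hn]
      convert this using 3 <;> omega
    have hCle : C t (visit t) ≤ c (d t) (w t l) + c (w t l) (d t) :=
      (hC t (visit t)).2 ⟨w t l, hmem, rfl⟩
    rw [hsplit]
    rw [h0] at hpre
    rw [hkd] at hsuf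
    linarith
  have h1 : ∑ t, C t (visit t) ≤ B :=
    le_trans (Finset.sum_le_sum fun t _ => key t) hbud
  exact absurd h1 (not_le.mpr (hung visit hinj))
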